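/- Let H be a complex Hilbert space, A a bounded self-adjoint operator on H with A ≥ ε·I for some ε > 0, and C a bounded operator on H. Set B = A^{1/2} C A^{1/2}. Let κ > 0 and γ > 0 be such that ‖C‖·√(1+γ²) < 1. Then for every z ∈ ℂ with Re z = −κ + γ·|Im z|, the operator z·I − A − B is boundedly invertible, the series ∑_{n=0}^∞ (C A (z·I − A)⁻¹)ⁿ converges absolutely in operator norm, and (z·I − A − B)⁻¹ = A^{1/2} (z·I − A)⁻¹ [∑_{n=0}^∞ (C A (z·I − A)⁻¹)ⁿ] A^{−1/2}. -/

import Mathlib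

open ContinuousLinearMap
open scoped ComplexOrder
set_option maxHeartbeats 1000000

private lemma aux_commute_ringInverse {R : Type*} [Ring R] {x u : R} (hu : IsUnit u)
    (h : x * u = u * x) : x * Ring.inverse u = Ring.inverse u * x := by
  have h2 : Ring.inverse u * u = 1 := Ring.inverse_mul_cancel u hu
  have h1 : u * Ring.inverse u = 1 := Ring.mul_inverse_cancel u hu
  calc x * Ring.inverse u = Ring.inverse u * u * x * Ring.inverse u := by rw [h2, one_mul]
    _ = Ring.inverse u * (u * x) * Ring.inverse u := by rw [mul_assoc (Ring.inverse u)]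
    _ = Ring.inverse u * (x * u) * Ring.inverse u := by rw [← h]
    _ = Ring.inverse u * x * (u * Ring.inverse u) := by noncomm_ring
    _ = Ring.inverse u * x := by rw [h1, mul_one]

theorem resolvent_neumann_series_form_bounded
    {H : Type*} [NormedAddCommGroup H] [InnerProductSpace ℂ H] [CompleteSpace H]
    (ε : ℝ) (hε : 0 < ε)
    (A C sqrtA : H →L[ℂ] H) (hA : IsSelfAdjoint A)
    (hAε : (A - (ε : ℂ) • (1 : H →L[ℂ] H)).IsPositive)
    (hsqrt : sqrtA.IsPositive) (hsqrt2 : sqrtA * sqrtA = A)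
    (κ γ : ℝ) (hκ : 0 < κ) (hγ : 0 < γ)
    (hC : ‖C‖ * Real.sqrt (1 + γ ^ 2) < 1)
    (z : ℂ) (hz : z.re = -κ + γ * |z.im|) :
    IsUnit (z • (1 : H →L[ℂ] H) - A - sqrtA * C * sqrtA) ∧
    Summable (fun n : ℕ =>
      ‖(C * (A * Ring.inverse (z • (1 : H →L[ℂ] H) - A))) ^ n‖) ∧
    Ring.inverse (z • (1 : H →L[ℂ] H) - A - sqrtA * C * sqrtA) =
      sqrtA * Ring.inverse (z • (1 : H →L[ℂ] H) - A) *
        (∑' n : ℕ, (C * (A * Ring.inverse (z • (1 : H →L[ℂ] H) - A))) ^ n) *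
        Ring.inverse sqrtA := by
  have hSN : IsStarNormal A := hA.isStarNormal
  -- spectrum facts
  have hspec : ∀ μ ∈ spectrum ℂ A, μ.im = 0 ∧ ε ≤ μ.re := by
    intro μ hμ
    refine ⟨hA.im_eq_zero_of_mem_spectrum hμ, ?_⟩
    have hpos : (0 : H →L[ℂ] H) ≤ A - (ε : ℂ) • 1 :=
      (ContinuousLinearMap.nonneg_iff_isPositive _).mpr hAε
    have hmem : μ - (ε : ℂ) ∈ spectrum ℂ (A - algebraMap ℂ (H →L[ℂ] H) (ε : ℂ)) := by
      rw [← spectrum.sub_singleton_eq]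
      exact Set.sub_mem_sub hμ rfl
    rw [Algebra.algebraMap_eq_smul_one] at hmem
    have := spectrum_nonneg_of_nonneg hpos hmem
    rw [Complex.le_def] at this
    have h1 : (0 : ℂ).re ≤ (μ - (ε : ℂ)).re := this.1
    simp only [Complex.zero_re, Complex.sub_re, Complex.ofReal_re] at h1
    linarith
  set u : H →L[ℂ] H := z • (1 : H →L[ℂ] H) - A with hu_def
  -- z is not in the spectrum of A
  have hzs : z ∉ spectrum ℂ A := by
    intro hmem
    obtain ⟨him, hre⟩ := hspec z hmem
    rw [him] at hz
    simp at hz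
    linarith
  have hu_unit : IsUnit u := by
    have := spectrum.notMem_iff.mp hzs
    rwa [Algebra.algebraMap_eq_smul_one] at this
  set R : H →L[ℂ] H := Ring.inverse u with hR_def
  have huR : u * R = 1 := Ring.mul_inverse_cancel u hu_unit
  have hRu : R * u = 1 := Ring.inverse_mul_cancel u hu_unit
  -- A * R via cfc
  set f : ℂ → ℂ := fun μ => μ * (z - μ)⁻¹ with hf_def
  have hzne : ∀ μ ∈ spectrum ℂ A, z - μ ≠ 0 := by
    intro μ hμ h0
    rw [sub_eq_zero] at h0
    exact hzs (h0 ▸ hμ)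
  have hcont : ContinuousOn f (spectrum ℂ A) := by
    apply ContinuousOn.mul continuousOn_id
    exact ContinuousOn.inv₀ (by fun_prop) hzne
  have hgcont : ContinuousOn (fun μ : ℂ => z - μ) (spectrum ℂ A) := by fun_prop
  have hg : cfc (fun μ : ℂ => z - μ) A = u := by
    rw [cfc_sub _ _ A (by fun_prop) (by fun_prop), cfc_const z A, cfc_id' ℂ A,
      Algebra.algebraMap_eq_smul_one]
  have hfu : cfc f A * u = A := by
    rw [← hg, ← cfc_mul f _ A hcont hgcont]
    have : cfc (fun μ => f μ * (z - μ)) A = cfc (id : ℂ → ℂ) A := by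
      apply cfc_congr
      intro μ hμ
      simp only [hf_def, id_eq]
      field_simp [hzne μ hμ]
    rw [this, cfc_id ℂ A]

  have hAR : A * R = cfc f A := by
    calc A * R = cfc f A * u * R := by rw [hfu]
      _ = cfc f A * (u * R) := by rw [mul_assoc]
      _ = cfc f A := by rw [huR, mul_one]
  -- norm bound on A * R
  have hsq : Real.sqrt (1 + γ ^ 2) ^ 2 = 1 + γ ^ 2 := Real.sq_sqrt (by positivity)
  have hsqpos : 0 < Real.sqrt (1 + γ ^ 2) := Real.sqrt_pos.mpr (by positivity)
  have hARnorm : ‖A * R‖ ≤ Real.sqrt (1 + γ ^ 2) := by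
    rw [hAR]
    apply norm_cfc_le hsqpos.le
    intro μ hμ
    obtain ⟨him, hre⟩ := hspec μ hμ
    set lam := μ.re with hlam
    set a := z.re - lam with ha
    set t := |z.im| with ht_def
    have ht : 0 ≤ t := abs_nonneg _
    have hνsq : ‖z - μ‖ ^ 2 = a ^ 2 + t ^ 2 := by
      rw [Complex.sq_norm, Complex.normSq_apply]
      simp only [Complex.sub_re, Complex.sub_im, him, ha, ht_def, hlam]
      rw [sq_abs]
      ring
    have hkey : (lam + κ) ^ 2 ≤ (1 + γ ^ 2) * (a ^ 2 + t ^ 2) := by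
      have hlk : lam + κ = γ * t - a := by rw [ha]; linarith [hz]
      nlinarith [sq_nonneg (t + γ * a)]
    have hnpos : 0 < ‖z - μ‖ := by
      rw [norm_pos_iff]
      exact sub_ne_zero.mpr fun h => hzne μ hμ (by rw [h, sub_self])
    have hlampos : 0 < lam + κ := by linarith
    have hle : lam ≤ Real.sqrt (1 + γ ^ 2) * ‖z - μ‖ := by
      have h2 : (lam + κ) ^ 2 ≤ (Real.sqrt (1 + γ ^ 2) * ‖z - μ‖) ^ 2 := by
        rw [mul_pow, hsq]; rw [hνsq] at *; linarith
      nlinarith [mul_pos hsqpos hnpos]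
    have hnormμ : ‖μ‖ = lam := by
      have : μ = (lam : ℂ) := Complex.ext rfl (by simpa using him)
      rw [this, Complex.norm_real, Real.norm_eq_abs, abs_of_pos (by linarith)]
    rw [hf_def]
    simp only [norm_mul, norm_inv]
    rw [hnormμ]
    rw [mul_inv_le_iff₀ hnpos]
    exact hle
  -- the Neumann series
  set X : H →L[ℂ] H := C * (A * R) with hX_def
  have hXnorm : ‖X‖ < 1 := by
    calc ‖X‖ ≤ ‖C‖ * ‖A * R‖ := norm_mul_le _ _
      _ ≤ ‖C‖ * Real.sqrt (1 + γ ^ 2) := by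
          exact mul_le_mul_of_nonneg_left hARnorm (norm_nonneg _)
      _ < 1 := hC
  have hpow : ∀ n : ℕ, ‖X ^ n‖ ≤ ‖X‖ ^ n := by
    intro n
    induction n with
    | zero =>
      rw [pow_zero, pow_zero, ContinuousLinearMap.one_def]
      exact ContinuousLinearMap.norm_id_le
    | succ n ih =>
      rw [pow_succ, pow_succ]
      exact le_trans (norm_mul_le _ _) (mul_le_mul_of_nonneg_right ih (norm_nonneg X))
  have hsummable : Summable (fun n : ℕ => ‖X ^ n‖) :=
    Summable.of_nonneg_of_le (fun n => norm_nonneg _) hpow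
      (summable_geometric_of_lt_one (norm_nonneg X) hXnorm)
  -- geometric series
  set S : H →L[ℂ] H := ∑' n : ℕ, X ^ n with hS_def
  have hS1 : (1 - X) * S = 1 := mul_neg_geom_series X hXnorm
  have hS2 : S * (1 - X) = 1 := geom_series_mul_neg X hXnorm
  -- sqrtA is a unit
  have hAunit : IsUnit A := by
    have h0 : (0 : ℂ) ∉ spectrum ℂ A := by
      intro h
      have := (hspec 0 h).2
      simp only [Complex.zero_re] at this
      linarith
    have h1 := spectrum.notMem_iff.mp h0
    rw [map_zero, zero_sub] at h1
    simpa using h1.neg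
  have hsA : sqrtA * A = A * sqrtA := by rw [← hsqrt2, ← mul_assoc]
  have hs_unit : IsUnit sqrtA := by
    refine isUnit_iff_exists.mpr ⟨sqrtA * Ring.inverse A, ?_, ?_⟩
    · rw [← mul_assoc, hsqrt2]
      exact Ring.mul_inverse_cancel A hAunit
    · rw [aux_commute_ringInverse hAunit hsA, mul_assoc, hsqrt2]
      exact Ring.inverse_mul_cancel A hAunit
  set si : H →L[ℂ] H := Ring.inverse sqrtA with hsi_def
  have hssi : sqrtA * si = 1 := Ring.mul_inverse_cancel _ hs_unit
  have hsis : si * sqrtA = 1 := Ring.inverse_mul_cancel _ hs_unit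
  have hsu : sqrtA * u = u * sqrtA := by
    rw [hu_def]
    simp only [mul_sub, sub_mul, mul_smul_comm, smul_mul_assoc, one_mul, mul_one, hsA]
  have hsiu : si * u = u * si := (aux_commute_ringInverse hs_unit hsu.symm).symm
  have hAsi : A * si = sqrtA := by rw [← hsqrt2, mul_assoc, hssi, mul_one]
  -- helper right-assoc versions
  have huR' : ∀ y : H →L[ℂ] H, u * (R * y) = y := fun y => by
    rw [← mul_assoc, huR, one_mul]
  have hRu' : ∀ y : H →L[ℂ] H, R * (u * y) = y := fun y => by
    rw [← mul_assoc, hRu, one_mul]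
  have hss' : ∀ y : H →L[ℂ] H, sqrtA * (sqrtA * y) = A * y := fun y => by
    rw [← mul_assoc, hsqrt2]
  have hsis' : ∀ y : H →L[ℂ] H, si * (sqrtA * y) = y := fun y => by
    rw [← mul_assoc, hsis, one_mul]
  have hus' : ∀ y : H →L[ℂ] H, u * (sqrtA * y) = sqrtA * (u * y) := fun y => by
    rw [← mul_assoc, ← hsu, mul_assoc]
  have hXu : X * u = C * A := by
    rw [hX_def, mul_assoc, mul_assoc, hRu, mul_one]
  have hSu : S * u = u + S * (C * A) := by
    calc S * u = S * (((1 - X) + X) * u) := by rw [sub_add_cancel, one_mul]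
      _ = S * ((1 - X) * u) + S * (X * u) := by rw [add_mul, mul_add]
      _ = u + S * (C * A) := by rw [← mul_assoc, hS2, one_mul, hXu]
  set T : H →L[ℂ] H := u - sqrtA * C * sqrtA with hT_def
  set W : H →L[ℂ] H := sqrtA * R * S * si with hW_def
  have h1mX : ∀ y : H →L[ℂ] H, S * y - X * (S * y) = y := fun y => by
    have h : (1 - X) * (S * y) = y := by rw [← mul_assoc, hS1, one_mul]
    calc S * y - X * (S * y) = (1 - X) * (S * y) := by rw [sub_mul, one_mul]
      _ = y := h
  have hTW : T * W = 1 := by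
    rw [hT_def, hW_def]
    simp only [sub_mul, mul_assoc]
    rw [hus', huR', hss']
    calc sqrtA * (S * si) - sqrtA * (C * (A * (R * (S * si))))
        = sqrtA * (S * si - X * (S * si)) := by
          rw [mul_sub, hX_def]; simp only [mul_assoc]
      _ = sqrtA * si := by rw [h1mX]
      _ = 1 := hssi
  have hSu' : ∀ y : H →L[ℂ] H, S * (u * y) = u * y + S * (C * (A * y)) := fun y => by
    have := congrArg (fun w => w * y) hSu
    simpa only [mul_assoc, add_mul] using this
  have hWT : W * T = 1 := by
    rw [hT_def, hW_def]
    simp only [mul_sub, mul_assoc]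
    rw [hsis', hsiu, hSu', mul_add, mul_add, hRu', hAsi, hssi]
    abel
  have hT_unit : IsUnit T := ⟨⟨T, W, hTW, hWT⟩, rfl⟩
  refine ⟨hT_unit, hsummable, ?_⟩
  calc Ring.inverse T = Ring.inverse T * (T * W) := by rw [hTW, mul_one]
    _ = Ring.inverse T * T * W := (mul_assoc _ _ _).symm
    _ = W := by rw [Ring.inverse_mul_cancel T hT_unit, one_mul]
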